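/- Every admissible frame can be obtained from the frame (1,0,0,...) of the empty Dyck path by a finite sequence of lifting operations s(I) = (2, i_0, i_1, ...) and extension operations a(I) = (i_0+1, i_1+1, i_2, ...); more precisely, every Dyck path has the same frame as some path obtained by lifting a path and gluing finitely many copies of the length-2 path at the end. -/

import Mathlib

/-- A step of a Dyck path: `true` = up step (1,1), `false` = down step (1,-1). -/
def dstep (b : Bool) : ℤ := if b then 1 else -1

/-- Height of the path after its first `k` steps. -/
def dheight (p : List Bool) (k : ℕ) : ℤ := ((p.take k).map dstep).sum

/-- A Dyck path: ends at height 0 and never goes below the x-axis. -/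
def IsDyck (p : List Bool) : Prop :=
  (p.map dstep).sum = 0 ∧ ∀ k, 0 ≤ dheight p k

/-- Number of lattice points of the path at level `l` (its "feet" at level `l`). -/
def feet (p : List Bool) (l : ℤ) : ℕ :=
  ((List.range (p.length + 1)).map (dheight p)).count l

/-- The frame of a Dyck path: at position `k`, the number of its points at height `k`. -/
def frame (p : List Bool) : ℕ → ℕ := fun k => feet p (k : ℤ)

/-- `DyckFeet m l j` = number of Dyck paths of length `m` with exactly `j` points at level `l`. -/
noncomputable def DyckFeet (m : ℕ) (l : ℤ) (j : ℕ) : ℕ :=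
  Set.ncard {p : List Bool | p.length = m ∧ IsDyck p ∧ feet p l = j}

/-- A sequence is admissible if it is the frame of some Dyck path. -/
def Admissible (I : ℕ → ℕ) : Prop := ∃ p : List Bool, IsDyck p ∧ frame p = I

/-- The frame (1,0,0,...) of the empty Dyck path. -/
def baseFrame : ℕ → ℕ := fun k => if k = 0 then 1 else 0

/-- The lifting operation on frames: s(i_0,i_1,...) = (2,i_0,i_1,...). -/
def sOp (I : ℕ → ℕ) : ℕ → ℕ := fun k => if k = 0 then 2 else I (k - 1)

/-- The extension operation on frames: a(i_0,i_1,i_2,...) = (i_0+1, i_1+1, i_2, ...). -/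
def aOp (I : ℕ → ℕ) : ℕ → ℕ := fun k => if k ≤ 1 then I k + 1 else I k

/-- Sequences obtainable from the base frame by liftings and extensions. -/
inductive Reach : (ℕ → ℕ) → Prop
  | base : Reach baseFrame
  | lift {I : ℕ → ℕ} : Reach I → Reach (sOp I)
  | ext {I : ℕ → ℕ} : Reach I → Reach (aOp I)

lemma dheight_zero (p : List Bool) : dheight p 0 = 0 := rfl
lemma dheight_ge (p : List Bool) (k : ℕ) (h : p.length ≤ k) :
    dheight p k = (p.map dstep).sum := by
  simp [dheight, List.take_of_length_le h]
lemma dheight_append_le (p r : List Bool) (k : ℕ) (h : k ≤ p.length) :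
    dheight (p ++ r) k = dheight p k := by
  simp [dheight, List.take_append_of_le_length h]
lemma dheight_append (p r : List Bool) (k : ℕ) :
    dheight (p ++ r) (p.length + k) = (p.map dstep).sum + dheight r k := by
  simp [dheight, List.take_append, List.take_append_of_le_length,
    List.take_of_length_le (by simp : (p.map dstep).length ≤ p.length + k)]

lemma feet_append (p r : List Bool) (hp : (p.map dstep).sum = 0) (l : ℤ) :
    feet (p ++ r) l + (if l = 0 then 1 else 0) = feet p l + feet r l := by
  have hlen : (p ++ r).length + 1 = (p.length + 1) + r.length := by simp; omega
  have h1 : (List.range ((p++r).length+1)).map (dheight (p++r))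
      = ((List.range (p.length+1)).map (dheight p))
        ++ ((List.range r.length).map (fun j => dheight r (j+1))) := by
    rw [hlen, List.range_add, List.map_append, List.map_map]
    congr 1
    · apply List.map_congr_left; intro j hj
      exact dheight_append_le _ _ _ (Nat.lt_succ_iff.mp (List.mem_range.mp hj))
    · apply List.map_congr_left; intro j hj
      simp only [Function.comp_apply]
      show dheight (p++r) (p.length + 1 + j) = dheight r (j+1)
      rw [show p.length + 1 + j = p.length + (j+1) by ring, dheight_append, hp, zero_add]
  have h2 : (List.range (r.length+1)).map (dheight r)
      = 0 :: (List.range r.length).map (fun j => dheight r (j+1)) := by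
    rw [List.range_succ_eq_map]
    simp [List.map_map, Function.comp, dheight_zero]
  rw [feet, feet, feet, h1, h2, List.count_append, List.count_cons]
  rcases eq_or_ne l 0 with h | h
  · subst h; simp; omega
  · simp [h, Ne.symm h]

lemma heights_lift (q : List Bool) (hq : (q.map dstep).sum = 0) :
    (List.range ((true :: (q ++ [false])).length + 1)).map (dheight (true :: (q ++ [false])))
      = 0 :: (((List.range (q.length+1)).map (fun j => 1 + dheight q j)) ++ [0]) := by
  have hlen : (true :: (q ++ [false])).length + 1 = (q.length + 2) + 1 := by simp
  rw [hlen, List.range_succ, List.range_succ_eq_map]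
  rw [List.map_append, List.map_cons, List.map_map, List.map_singleton]
  have hhead : dheight (true :: (q ++ [false])) 0 = 0 := rfl
  have hlast : dheight (true :: (q ++ [false])) (q.length + 2) = 0 := by
    rw [dheight_ge _ _ (by simp)]
    simp [dstep, hq]
  rw [hhead, hlast]
  have hmid : List.map (dheight (true :: (q ++ [false])) ∘ Nat.succ) (List.range (q.length + 1))
      = List.map (fun j => 1 + dheight q j) (List.range (q.length + 1)) := by
    apply List.map_congr_left; intro j hj
    have hj' : j ≤ q.length := Nat.lt_succ_iff.mp (List.mem_range.mp hj)
    simp only [Function.comp_apply]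
    show dheight (true :: (q ++ [false])) (j+1) = 1 + dheight q j
    simp [dheight, List.take_append_of_le_length hj', dstep]
  rw [hmid]
  simp

lemma frame_lift (q : List Bool) (hq : IsDyck q) :
    frame (true :: (q ++ [false])) = sOp (frame q) := by
  funext k
  have H := heights_lift q hq.1
  rw [frame]
  rw [feet, H]
  cases k with
  | zero =>
    rw [List.count_cons, List.count_append]
    have h0 : List.count (0:ℤ) ((List.range (q.length+1)).map (fun j => 1 + dheight q j)) = 0 := by
      rw [List.count_eq_zero]
      intro hmem
      obtain ⟨j, -, hj⟩ := List.mem_map.mp hmem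
      have := hq.2 j
      omega
    simp [sOp, h0]
  | succ k =>
    rw [List.count_cons, List.count_append]
    have h1 : ((k:ℤ)+1) ≠ 0 := by omega
    have hmap : (List.range (q.length+1)).map (fun j => 1 + dheight q j)
        = ((List.range (q.length+1)).map (dheight q)).map (fun x => 1 + x) := by
      rw [List.map_map]; rfl
    have hinj : Function.Injective (fun x : ℤ => 1 + x) := fun a b h => by
      simpa using h
    have h2 : List.count ((k:ℤ)+1) ((List.range (q.length+1)).map (fun j => 1 + dheight q j))
        = feet q k := by
      rw [hmap, show ((k:ℤ)+1) = (fun x : ℤ => 1 + x) (k:ℤ) by ring]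
      rw [List.count_map_of_injective _ _ hinj]
      rfl
    rw [show (((k+1:ℕ)):ℤ) = (k:ℤ)+1 from by push_cast; ring]
    rw [h2]
    simp [sOp, h1, Ne.symm h1, frame]

lemma feet_UD (l : ℤ) : feet [true, false] l
    = (if l = 0 then 2 else 0) + (if l = 1 then 1 else 0) := by
  have h0 : dheight [true, false] 0 = 0 := rfl
  have h1 : dheight [true, false] 1 = 1 := by simp [dheight, dstep]
  have h2 : dheight [true, false] 2 = 0 := by simp [dheight, dstep]
  have : (List.range 3).map (dheight [true, false]) = [0, 1, 0] := by
    rw [show (3:ℕ) = 2+1 from rfl, List.range_succ,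
        show (2:ℕ) = 1+1 from rfl, List.range_succ,
        show (1:ℕ) = 0+1 from rfl, List.range_succ]
    simp [h0, h1, h2]
  rw [feet, show ([true,false].length + 1) = 3 from rfl, this]
  rcases eq_or_ne l 0 with h | h
  · subst h; decide
  rcases eq_or_ne l 1 with h' | h'
  · subst h'; decide
  · simp [List.count_cons, h, h', Ne.symm h, Ne.symm h']

lemma isDyck_UD : IsDyck [true, false] := by
  constructor
  · simp [dstep]
  · intro k
    match k with
    | 0 => simp [dheight_zero]
    | 1 => simp [dheight, dstep]
    | (n+2) =>
      rw [dheight_ge _ _ (by simp)]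
      simp [dstep]

lemma isDyck_append {p r : List Bool} (hp : IsDyck p) (hr : IsDyck r) : IsDyck (p ++ r) := by
  constructor
  · simp [hp.1, hr.1]
  · intro k
    rcases le_or_gt k p.length with h | h
    · rw [dheight_append_le _ _ _ h]; exact hp.2 k
    · have hk : k = p.length + (k - p.length) := by omega
      rw [hk, dheight_append, hp.1, zero_add]; exact hr.2 _

lemma isDyck_lift {q : List Bool} (hq : IsDyck q) : IsDyck (true :: (q ++ [false])) := by
  constructor
  · simp [dstep, hq.1]
  · intro k
    cases k with
    | zero => simp [dheight_zero]
    | succ j =>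
      rcases le_or_gt j q.length with h | h
      · have hh : dheight (true :: (q ++ [false])) (j+1) = 1 + dheight q j := by
          simp [dheight, List.take_append_of_le_length h, dstep]
        rw [hh]; have := hq.2 j; omega
      · rw [dheight_ge _ _ (by simp; omega)]
        simp [dstep, hq.1]

lemma frame_UDappend (p : List Bool) (hp : IsDyck p) :
    frame (p ++ [true, false]) = aOp (frame p) := by
  funext k
  have h := feet_append p [true, false] hp.1 (k : ℤ)
  rw [feet_UD] at h
  show feet (p ++ [true, false]) (k:ℤ) = aOp (frame p) k
  match k with
  | 0 => simp only [aOp, frame]; norm_num at h ⊢; try omega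
  | 1 => simp only [aOp, frame]; norm_num at h ⊢; try omega
  | (n+2) =>
    have c0 : ((n+2:ℕ):ℤ) ≠ 0 := by push_cast; omega
    have c1 : ((n+2:ℕ):ℤ) ≠ 1 := by push_cast; omega
    simp only [aOp, frame]
    rw [if_neg c0, if_neg c0, if_neg c1] at h
    have : ¬ (n+2 ≤ 1) := by omega
    rw [if_neg this]
    omega

lemma dheight_length (p : List Bool) : dheight p p.length = (p.map dstep).sum := by
  simp [dheight]
lemma dheight_succ (p : List Bool) (k : ℕ) (h : k < p.length) :
    dheight p (k+1) = dheight p k + dstep (p.get ⟨k, h⟩) := by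
  have h' : k < (p.map dstep).length := by simpa using h
  simp only [dheight, List.map_take]
  rw [List.sum_take_succ _ _ h']
  simp

lemma decomp (p : List Bool) (hp : IsDyck p) (hne : p ≠ []) :
    ∃ q r, IsDyck q ∧ IsDyck r ∧ p = (true :: (q ++ [false])) ++ r := by
  classical
  have hplen : 0 < p.length := List.length_pos_iff.mpr hne
  have hex : ∃ k, 0 < k ∧ dheight p k = 0 :=
    ⟨p.length, hplen, by rw [dheight_ge _ _ le_rfl]; exact hp.1⟩
  set n := Nat.find hex with hn
  obtain ⟨hn0, hnz⟩ := Nat.find_spec hex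
  rw [← hn] at hn0 hnz
  have hmin : ∀ k, 0 < k → k < n → dheight p k ≠ 0 := by
    intro k h1 h2 h3
    exact Nat.find_min hex h2 ⟨h1, h3⟩
  have hpos : ∀ k, 0 < k → k < n → 1 ≤ dheight p k := by
    intro k h1 h2
    have h3 := hp.2 k
    have h4 := hmin k h1 h2
    omega
  have hnlen : n ≤ p.length :=
    Nat.find_min' hex ⟨hplen, by rw [dheight_ge _ _ le_rfl]; exact hp.1⟩
  obtain ⟨b, t, rfl⟩ : ∃ b t, p = b :: t := by
    cases p with
    | nil => exact absurd rfl hne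
    | cons b t => exact ⟨b, t, rfl⟩
  have hb : b = true := by
    have h1 : dheight (b :: t) 1 = dstep b := by simp [dheight]
    have h2 := hp.2 1
    cases b
    · rw [h1] at h2; simp [dstep] at h2
    · rfl
  subst hb
  have hlc : (true :: t).length = t.length + 1 := rfl
  have hd1 : dheight (true :: t) 1 = 1 := by simp [dheight, dstep]
  have hn2 : 2 ≤ n := by
    by_contra h
    push_neg at h
    have h1 : n = 1 := by omega
    rw [h1] at hnz
    omega
  have ht : ∀ j, dheight (true :: t) (j+1) = 1 + dheight t j := by
    intro j; simp [dheight, dstep]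
  have hlt : n - 1 < (true :: t).length := by omega
  have hstep : dheight (true :: t) n
      = dheight (true :: t) (n-1) + dstep ((true :: t).get ⟨n-1, hlt⟩) := by
    rw [← dheight_succ _ _ hlt]
    congr 1
    omega
  have hprev1 : dheight (true :: t) (n-1) = 1 := by
    have hge := hpos (n-1) (by omega) (by omega)
    have hle := hp.2 (n-1)
    cases hg : (true :: t).get ⟨n-1, hlt⟩ <;> rw [hg] at hstep <;>
      simp [dstep] at hstep <;> omega
  have hlast : (true :: t).get ⟨n-1, hlt⟩ = false := by
    cases hg : (true :: t).get ⟨n-1, hlt⟩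
    · rfl
    · rw [hg] at hstep
      simp [dstep] at hstep
      omega
  have htlen : n - 1 ≤ t.length := by omega
  have hlt2 : n - 2 < t.length := by omega
  -- structure of t
  have h3 : t.get ⟨n-2, hlt2⟩ = false := by
    have e : (true :: t).get ⟨n-1, hlt⟩ = t.get ⟨n-2, hlt2⟩ := by
      have hfin : (⟨n-1, hlt⟩ : Fin (true::t).length) = ⟨(n-2)+1, by omega⟩ := by
        apply Fin.ext; simp only; omega
      rw [hfin]
      simp
    rw [← e]; exact hlast
  refine ⟨t.take (n-2), t.drop (n-1), ?_, ?_, ?_⟩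
  · -- IsDyck q
    have hqlen : (t.take (n-2)).length = n - 2 := by
      rw [List.length_take]; omega
    have hdq : ∀ j, dheight (t.take (n-2)) j = dheight t (min j (n-2)) := by
      intro j
      simp [dheight, List.take_take]
    constructor
    · rw [← dheight_length, hqlen, hdq]
      have : min (n-2) (n-2) = n-2 := by omega
      rw [this]
      have h4 := ht (n-2)
      have h5 : (n-2)+1 = n-1 := by omega
      rw [h5, hprev1] at h4
      omega
    · intro k
      rw [hdq]
      set m := min k (n-2) with hm
      have h4 := ht m
      have h5 := hpos (m+1) (by omega) (by omega)
      rw [h4] at h5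
      omega
  · -- IsDyck r
    have hsplit : (true :: t) = (true :: t).take n ++ t.drop (n-1) := by
      conv_lhs => rw [← List.take_append_drop n (true :: t)]
      congr 1
      rw [show n = (n-1)+1 by omega]
      rfl
    have hlen' : ((true :: t).take n).length = n := by
      rw [List.length_take]; omega
    have hr : ∀ k, dheight (t.drop (n-1)) k = dheight (true :: t) (n + k) := by
      intro k
      conv_rhs => rw [hsplit]
      rw [show n + k = ((true :: t).take n).length + k by rw [hlen'], dheight_append]
      have he : (((true :: t).take n).map dstep).sum = dheight (true :: t) n := rfl
      rw [he, hnz, zero_add]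
    constructor
    · rw [← dheight_length, hr]
      have hrlen : (t.drop (n-1)).length = t.length - (n-1) := by simp
      rw [hrlen, show n + (t.length - (n-1)) = (true :: t).length by omega,
        dheight_length]
      exact hp.1
    · intro k
      rw [hr]
      exact hp.2 _
  · -- equality
    have h2 : t.drop (n-2) = t.get ⟨n-2, hlt2⟩ :: t.drop (n-1) := by
      rw [List.drop_eq_getElem_cons hlt2, show n-2+1 = n-1 from by omega]
      simp [List.get_eq_getElem]
    conv_lhs => rw [show (true :: t) = true :: (t.take (n-2) ++ t.drop (n-2)) by rw [List.take_append_drop]]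
    rw [h2, h3]
    simp

lemma aOp_iter (g : ℕ → ℕ) (m : ℕ) :
    (aOp^[m]) g = fun k => if k ≤ 1 then g k + m else g k := by
  induction m with
  | zero => funext k; simp
  | succ m ih =>
    rw [Function.iterate_succ_apply', ih]
    funext k
    simp only [aOp]
    split_ifs <;> omega

lemma tower (Q : List Bool) (m : ℕ) (hQ : IsDyck Q) :
    IsDyck ((true :: (Q ++ [false])) ++ (List.replicate m [true, false]).flatten) ∧
    frame ((true :: (Q ++ [false])) ++ (List.replicate m [true, false]).flatten)
      = (aOp^[m]) (sOp (frame Q)) := by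
  induction m with
  | zero =>
    simp only [List.replicate, List.flatten_nil, List.append_nil, Function.iterate_zero, id]
    exact ⟨isDyck_lift hQ, frame_lift Q hQ⟩
  | succ m ih =>
    have hrep : (List.replicate (m+1) [true, false]).flatten
        = (List.replicate m [true, false]).flatten ++ [true, false] := by
      rw [List.replicate_succ']
      simp
    rw [hrep, ← List.append_assoc]
    refine ⟨isDyck_append ih.1 isDyck_UD, ?_⟩
    rw [frame_UDappend _ ih.1, ih.2, Function.iterate_succ_apply']

lemma frame_append (p r : List Bool) (hp : (p.map dstep).sum = 0) (k : ℕ) :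
    frame (p ++ r) k + (if k = 0 then 1 else 0) = frame p k + frame r k := by
  have h := feet_append p r hp (k : ℤ)
  have hc : ((k:ℤ) = 0) ↔ (k = 0) := by omega
  simp only [frame]
  rw [← h]
  congr 1
  simp [hc]

lemma key : ∀ N (p : List Bool), p.length ≤ N → IsDyck p → p ≠ [] →
    ∃ Q m, IsDyck Q ∧ Q.length + 2 + 2*m = p.length ∧
      frame p = frame ((true :: (Q ++ [false])) ++ (List.replicate m [true, false]).flatten) := by
  intro N
  induction N with
  | zero =>
    intro p hl hp hne
    exact absurd (List.length_eq_zero_iff.mp (Nat.le_zero.mp hl)) hne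
  | succ N ihN =>
    intro p hl hp hne
    obtain ⟨q, r, hq, hr, hpe⟩ := decomp p hp hne
    have hplen : p.length = q.length + 2 + r.length := by rw [hpe]; simp; omega
    by_cases hrnil : r = []
    · subst hrnil
      refine ⟨q, 0, hq, by simp only [List.length_nil] at hplen; omega, ?_⟩
      rw [hpe]
      simp
    · obtain ⟨Q', m', hQ', hlen', hfr'⟩ := ihN r (by omega) hr hrnil
      refine ⟨q ++ Q', m' + 1, isDyck_append hq hQ', by simp; omega, ?_⟩
      rw [(tower (q ++ Q') (m'+1) (isDyck_append hq hQ')).2]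
      rw [(tower Q' m' hQ').2] at hfr'
      funext k
      have hA : ∀ j, frame p j + (if j = 0 then 1 else 0)
          = frame (true :: (q ++ [false])) j + frame r j := by
        intro j; rw [hpe]; exact frame_append _ _ (isDyck_lift hq).1 j
      have hB : ∀ j, frame (q ++ Q') j + (if j = 0 then 1 else 0) = frame q j + frame Q' j :=
        fun j => frame_append _ _ hq.1 j
      simp only [frame_lift q hq, hfr', aOp_iter] at hA
      simp only [aOp_iter]
      match k with
      | 0 =>
        have h0 := hA 0
        simp only [sOp] at h0 ⊢
        simp at h0 ⊢
        omega
      | 1 =>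
        have h1 := hA 1
        have hb0 := hB 0
        simp only [sOp] at h1 ⊢
        simp at h1 hb0 ⊢
        omega
      | (j+2) =>
        have h2 := hA (j+2)
        have hb := hB (j+1)
        simp only [sOp] at h2 ⊢
        simp at h2 hb ⊢
        omega

lemma frame_nil : frame [] = baseFrame := by
  funext k
  match k with
  | 0 => rfl
  | (j+1) =>
    have h : ((j:ℤ) + 1) ≠ 0 := by omega
    simp [frame, feet, baseFrame, dheight, List.range_succ, List.count_cons, h, Ne.symm h]

lemma reach_aOp_iter (m : ℕ) (f : ℕ → ℕ) (hf : Reach f) : Reach ((aOp^[m]) f) := by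
  induction m with
  | zero => simpa using hf
  | succ m ih => rw [Function.iterate_succ_apply']; exact Reach.ext ih

lemma reach_of_dyck : ∀ N (p : List Bool), p.length ≤ N → IsDyck p → Reach (frame p) := by
  intro N
  induction N with
  | zero =>
    intro p hl hp
    have : p = [] := List.length_eq_zero_iff.mp (Nat.le_zero.mp hl)
    subst this
    rw [frame_nil]
    exact Reach.base
  | succ N ih =>
    intro p hl hp
    by_cases hne : p = []
    · subst hne; rw [frame_nil]; exact Reach.base
    · obtain ⟨Q, m, hQ, hlen, hfr⟩ := key p.length p le_rfl hp hne
      rw [hfr, (tower Q m hQ).2]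
      exact reach_aOp_iter m _ (Reach.lift (ih Q (by omega) hQ))


/-- Every admissible frame is obtained from (1,0,0,...) by liftings and extensions;
more precisely, every nonempty Dyck path has the same frame as a path obtained by lifting
a path and gluing finitely many copies of the length-2 path UD at the end. -/
theorem stmt7 :
    (∀ I : ℕ → ℕ, Admissible I → Reach I) ∧
    (∀ p : List Bool, IsDyck p → p ≠ [] →
      ∃ (q : List Bool) (m : ℕ), IsDyck q ∧
        frame p = frame ((true :: (q ++ [false])) ++ (List.replicate m [true, false]).flatten)) := by
  constructor
  · rintro I ⟨p, hp, rfl⟩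
    exact reach_of_dyck p.length p le_rfl hp
  · intro p hp hne
    obtain ⟨Q, m, hQ, -, hfr⟩ := key p.length p le_rfl hp hne
    exact ⟨Q, m, hQ, hfr⟩
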